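/- Let C₀ and C₁ be symmetric positive definite dX × dX real matrices and Hx a dY × dX matrix of rank dY, with V_i = Hx C_i Hx* and S_i = [[C_i, (1/2) C_i Hx*], [(1/2) Hx C_i, (1/3) V_i]] for i = 0,1. Then Tr(C₁^{-1} C₀) + Tr(V₁^{-1} V₀) − (dX + dY) + log( (det C₁ · det V₁) / (det C₀ · det V₀) ) = Tr(S₁^{-1} S₀) − (dX + dY) + log( det S₁ / det S₀ ). -/

import Mathlib

open Matrix

lemma aux_posdef_sandwich {dY dX : ℕ} (C : Matrix (Fin dX) (Fin dX) ℝ)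
    (hC : C.PosDef) (Hx : Matrix (Fin dY) (Fin dX) ℝ) (hrank : Hx.rank = dY) :
    (Hx * C * Hxᵀ).PosDef := by
  have hinj : Function.Injective (Hxᵀ.mulVecLin) := by
    rw [← LinearMap.ker_eq_bot]
    have h1 : Hxᵀ.rank = dY := by rw [Matrix.rank_transpose]; exact hrank
    have h2 := LinearMap.finrank_range_add_finrank_ker (Hxᵀ.mulVecLin)
    rw [Module.finrank_pi] at h2
    have h3 : Module.finrank ℝ (LinearMap.ker Hxᵀ.mulVecLin) = 0 := by
      have : Hxᵀ.rank = Module.finrank ℝ (LinearMap.range Hxᵀ.mulVecLin) := rfl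
      simp only [Fintype.card_fin] at h2
      omega
    exact Submodule.finrank_eq_zero.mp h3
  refine Matrix.posDef_iff_dotProduct_mulVec.mpr ⟨?_, ?_⟩
  · have : (Hx * C * Hxᵀ).IsHermitian := by
      have := (hC.posSemidef.mul_mul_conjTranspose_same Hx).1
      simpa [Matrix.conjTranspose_eq_transpose_of_trivial] using this
    exact this
  · intro x hx
    have hx' : Hxᵀ *ᵥ x ≠ 0 := by
      intro h
      apply hx
      have h2 : Hxᵀ.mulVecLin x = Hxᵀ.mulVecLin 0 := by
        simp only [Matrix.mulVecLin_apply, h, Matrix.mulVec_zero]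
      exact hinj h2
    have hpos := hC.dotProduct_mulVec_pos hx'
    have key : star x ⬝ᵥ ((Hx * C * Hxᵀ) *ᵥ x)
        = star (Hxᵀ *ᵥ x) ⬝ᵥ (C *ᵥ (Hxᵀ *ᵥ x)) := by
      rw [star_trivial, star_trivial, ← Matrix.mulVec_mulVec, ← Matrix.mulVec_mulVec,
        Matrix.dotProduct_mulVec, ← Matrix.mulVec_transpose]
    rw [key]
    exact hpos

theorem joint_contrast_identity
    (dY dX : ℕ) (C₀ C₁ : Matrix (Fin dX) (Fin dX) ℝ)
    (hC0 : C₀.PosDef) (hC1 : C₁.PosDef)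
    (Hx : Matrix (Fin dY) (Fin dX) ℝ) (hrank : Hx.rank = dY) :
    let V₀ : Matrix (Fin dY) (Fin dY) ℝ := Hx * C₀ * Hxᵀ
    let V₁ : Matrix (Fin dY) (Fin dY) ℝ := Hx * C₁ * Hxᵀ
    let S₀ : Matrix (Fin dX ⊕ Fin dY) (Fin dX ⊕ Fin dY) ℝ :=
      Matrix.fromBlocks C₀ ((1/2 : ℝ) • (C₀ * Hxᵀ)) ((1/2 : ℝ) • (Hx * C₀)) ((1/3 : ℝ) • V₀)
    let S₁ : Matrix (Fin dX ⊕ Fin dY) (Fin dX ⊕ Fin dY) ℝ :=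
      Matrix.fromBlocks C₁ ((1/2 : ℝ) • (C₁ * Hxᵀ)) ((1/2 : ℝ) • (Hx * C₁)) ((1/3 : ℝ) • V₁)
    (C₁⁻¹ * C₀).trace + (V₁⁻¹ * V₀).trace - (dX + dY : ℝ) +
        Real.log ((C₁.det * V₁.det) / (C₀.det * V₀.det)) =
      (S₁⁻¹ * S₀).trace - (dX + dY : ℝ) + Real.log (S₁.det / S₀.det) := by
  intro V₀ V₁ S₀ S₁
  have hV0 : V₀.PosDef := aux_posdef_sandwich C₀ hC0 Hx hrank
  have hV1 : V₁.PosDef := aux_posdef_sandwich C₁ hC1 Hx hrank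
  -- the congruence matrix
  set M : Matrix (Fin dX ⊕ Fin dY) (Fin dX ⊕ Fin dY) ℝ :=
    Matrix.fromBlocks 1 0 ((1/2 : ℝ) • Hx) 1 with hM
  set N : Matrix (Fin dX ⊕ Fin dY) (Fin dX ⊕ Fin dY) ℝ :=
    Matrix.fromBlocks 1 0 (-((1/2 : ℝ) • Hx)) 1 with hN
  have hMN : M * N = 1 := by
    rw [hM, hN, Matrix.fromBlocks_multiply]
    simp [Matrix.fromBlocks_one]
  have hNM : N * M = 1 := by
    rw [hM, hN, Matrix.fromBlocks_multiply]
    simp [Matrix.fromBlocks_one]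
  have hMinv : M⁻¹ = N := Matrix.inv_eq_right_inv hMN
  -- diagonal factors
  set D₀ : Matrix (Fin dX ⊕ Fin dY) (Fin dX ⊕ Fin dY) ℝ :=
    Matrix.fromBlocks C₀ 0 0 ((1/12 : ℝ) • V₀) with hD0
  set D₁ : Matrix (Fin dX ⊕ Fin dY) (Fin dX ⊕ Fin dY) ℝ :=
    Matrix.fromBlocks C₁ 0 0 ((1/12 : ℝ) • V₁) with hD1
  have factor : ∀ (C : Matrix (Fin dX) (Fin dX) ℝ),
      M * (Matrix.fromBlocks C 0 0 ((1/12 : ℝ) • (Hx * C * Hxᵀ))) * Mᵀ =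
      Matrix.fromBlocks C ((1/2 : ℝ) • (C * Hxᵀ)) ((1/2 : ℝ) • (Hx * C))
        ((1/3 : ℝ) • (Hx * C * Hxᵀ)) := by
    intro C
    rw [hM, Matrix.fromBlocks_transpose, Matrix.fromBlocks_multiply,
      Matrix.fromBlocks_multiply]
    rw [Matrix.fromBlocks_inj]
    refine ⟨by simp, by simp, by simp [Matrix.smul_mul], ?_⟩
    simp only [Matrix.transpose_smul, transpose_one, transpose_zero, Matrix.smul_mul,
      Matrix.mul_smul, Matrix.zero_mul, Matrix.mul_zero, Matrix.one_mul, Matrix.mul_one,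
      zero_add, add_zero, Matrix.mul_assoc]
    module
  have hS0 : S₀ = M * D₀ * Mᵀ := (factor C₀).symm
  have hS1 : S₁ = M * D₁ * Mᵀ := (factor C₁).symm
  -- inverse of D₁
  have hC1inv : C₁ * C₁⁻¹ = 1 := Matrix.mul_nonsing_inv _ hC1.det_pos.ne'.isUnit
  have hV1inv : V₁ * V₁⁻¹ = 1 := Matrix.mul_nonsing_inv _ hV1.det_pos.ne'.isUnit
  have hD1inv : D₁⁻¹ = Matrix.fromBlocks C₁⁻¹ 0 0 ((12 : ℝ) • V₁⁻¹) := by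
    apply Matrix.inv_eq_right_inv
    rw [hD1, Matrix.fromBlocks_multiply]
    simp only [Matrix.mul_zero, Matrix.zero_mul, add_zero, zero_add, Matrix.smul_mul,
      Matrix.mul_smul, smul_smul, hC1inv, hV1inv]
    norm_num [Matrix.fromBlocks_one]
  -- trace computation
  have htrace : (S₁⁻¹ * S₀).trace = (C₁⁻¹ * C₀).trace + (V₁⁻¹ * V₀).trace := by
    have hS1inv : S₁⁻¹ = Mᵀ⁻¹ * D₁⁻¹ * M⁻¹ := by
      rw [hS1, Matrix.mul_inv_rev, Matrix.mul_inv_rev, Matrix.mul_assoc]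
    have hMTinv' : Mᵀ⁻¹ = Nᵀ :=
      Matrix.inv_eq_right_inv (by rw [← Matrix.transpose_mul, hNM, Matrix.transpose_one])
    have hMTinv : Mᵀ * Mᵀ⁻¹ = 1 := by
      rw [hMTinv', ← Matrix.transpose_mul, hNM, Matrix.transpose_one]
    calc (S₁⁻¹ * S₀).trace
        = (Mᵀ⁻¹ * (D₁⁻¹ * D₀) * Mᵀ).trace := by
          rw [hS1inv, hS0, hMinv]
          rw [show Mᵀ⁻¹ * D₁⁻¹ * N * (M * D₀ * Mᵀ) = Mᵀ⁻¹ * (D₁⁻¹ * ((N * M) * D₀)) * Mᵀ by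
            simp only [Matrix.mul_assoc]]
          rw [hNM, Matrix.one_mul, Matrix.mul_assoc]
      _ = (D₁⁻¹ * D₀).trace := by
          rw [Matrix.trace_mul_comm, ← Matrix.mul_assoc, hMTinv, Matrix.one_mul]
      _ = (C₁⁻¹ * C₀).trace + (V₁⁻¹ * V₀).trace := by
          rw [hD1inv, hD0, Matrix.fromBlocks_multiply]
          have h12 : (12:ℝ) • ((1/12:ℝ) • (V₁⁻¹ * V₀)) = V₁⁻¹ * V₀ := by
            rw [smul_smul]; norm_num
          simp only [Matrix.mul_zero, Matrix.zero_mul, add_zero, zero_add,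
            Matrix.smul_mul, Matrix.mul_smul, h12]
          simp [Matrix.trace, Fintype.sum_sum_type, Matrix.fromBlocks]
  -- determinant computation
  have hdetM : M.det = 1 := by
    rw [hM, Matrix.det_fromBlocks_zero₁₂]; simp
  have hdet : ∀ (C : Matrix (Fin dX) (Fin dX) ℝ),
      (M * (Matrix.fromBlocks C 0 0 ((1/12 : ℝ) • (Hx * C * Hxᵀ))) * Mᵀ).det
        = C.det * ((1/12 : ℝ) ^ dY * (Hx * C * Hxᵀ).det) := by
    intro C
    rw [Matrix.det_mul, Matrix.det_mul, hdetM, Matrix.det_transpose, hdetM,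
      Matrix.det_fromBlocks_zero₁₂, Matrix.det_smul]
    simp [Fintype.card_fin]
  have hdetS0 : S₀.det = C₀.det * ((1/12 : ℝ) ^ dY * V₀.det) := by
    rw [hS0, hD0]; exact hdet C₀
  have hdetS1 : S₁.det = C₁.det * ((1/12 : ℝ) ^ dY * V₁.det) := by
    rw [hS1, hD1]; exact hdet C₁
  have hk : ((1/12 : ℝ) ^ dY) ≠ 0 := by positivity
  have hlog : S₁.det / S₀.det = (C₁.det * V₁.det) / (C₀.det * V₀.det) := by
    rw [hdetS0, hdetS1]
    field_simp
  rw [htrace, hlog]
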